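/- If λ is an eigenvalue of the normalized Laplacian of G_{n+1}(m) with λ ∉ {0, 1, 2}, then μ = (m+2)·λ·(2-λ), equivalently λ = 1 ± sqrt(1 - μ/(m+2)), is an eigenvalue of the normalized Laplacian of G_n(m) with μ ∉ {0, 2}. -/

import Mathlib

open Matrix BigOperators
open Sum Finset
open scoped Classical

noncomputable def normLap {V : Type*} [Fintype V] (G : SimpleGraph V) : Matrix V V ℝ :=
  letI : DecidableRel G.Adj := Classical.decRel _
  let Dh : Matrix V V ℝ := Matrix.diagonal (fun v => (Real.sqrt (G.degree v))⁻¹)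
  Dh * (Matrix.diagonal (fun v => ((G.degree v : ℝ))) - G.adjMatrix ℝ) * Dh

noncomputable def NEE {V : Type*} [Fintype V] [DecidableEq V] (G : SimpleGraph V)
    (hL : (normLap G).IsHermitian) : ℝ :=
  ∑ i, Real.exp (hL.eigenvalues i - 1)

/-- One iteration of the fractal construction: every edge of the graph is
subdivided by a new middle vertex, and the middle vertex additionally receives
m pendant neighbors.  For an edge e, the new vertices are the pairs (e, j),
j : Fin (m+1); (e, 0) is the middle vertex and (e, j), j ≠ 0, the pendants. -/
noncomputable def fractalStep (m : ℕ) (P : (V : Type) × SimpleGraph V) :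
    (V : Type) × SimpleGraph V :=
  ⟨P.1 ⊕ (P.2.edgeSet × Fin (m + 1)),
    SimpleGraph.fromRel (fun x y =>
      match x, y with
      | Sum.inl u, Sum.inr (e, j) => j = 0 ∧ u ∈ (e : Sym2 P.1)
      | Sum.inr (e, j), Sum.inr (f, k) => e = f ∧ j = 0 ∧ k ≠ 0
      | _, _ => False)⟩

/-- The treelike fractal G_n(m): G_0(m) is a single edge, and each generation
is obtained from the previous one by one fractal iteration step. -/
noncomputable def fractal (m : ℕ) (n : ℕ) : (V : Type) × SimpleGraph V :=
  Nat.rec ⟨Fin 2, ⊤⟩ (fun _ ih => fractalStep m ih) n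

instance fractal_finite (m n : ℕ) : Finite (fractal m n).1 := by
  induction n with
  | zero => exact inferInstanceAs (Finite (Fin 2))
  | succ n ih =>
      exact inferInstanceAs
        (Finite ((fractal m n).1 ⊕ ((fractal m n).2.edgeSet × Fin (m + 1))))

noncomputable instance fractal_fintype (m n : ℕ) : Fintype (fractal m n).1 :=
  Fintype.ofFinite _

lemma mem_spectrum_of_eig {V : Type*} [Fintype V] [DecidableEq V] (M : Matrix V V ℝ)
    (mu : ℝ) (x : V → ℝ) (hx : x ≠ 0) (h : M.mulVec x = mu • x) :
    mu ∈ spectrum ℝ M := by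
  rw [spectrum.mem_iff]
  intro hunit
  have hdet : ((algebraMap ℝ (Matrix V V ℝ)) mu - M).det ≠ 0 := by
    have := (Matrix.isUnit_iff_isUnit_det _).mp hunit
    exact IsUnit.ne_zero this
  apply hdet
  rw [← Matrix.exists_mulVec_eq_zero_iff]
  exact ⟨x, hx, by
      rw [Matrix.sub_mulVec, h]
      have : (algebraMap ℝ (Matrix V V ℝ)) mu = mu • (1 : Matrix V V ℝ) := by
        simp [Algebra.algebraMap_eq_smul_one]
      rw [this, Matrix.smul_mulVec, Matrix.one_mulVec, sub_self]⟩

lemma eig_of_mem_spectrum {V : Type*} [Fintype V] [DecidableEq V] (M : Matrix V V ℝ)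
    (mu : ℝ) (h : mu ∈ spectrum ℝ M) : ∃ x : V → ℝ, x ≠ 0 ∧ M.mulVec x = mu • x := by
  rw [spectrum.mem_iff] at h
  have hdet : ((algebraMap ℝ (Matrix V V ℝ)) mu - M).det = 0 := by
    by_contra hd
    exact h ((Matrix.isUnit_iff_isUnit_det _).mpr (isUnit_iff_ne_zero.mpr hd))
  obtain ⟨x, hx, hxv⟩ := Matrix.exists_mulVec_eq_zero_iff.mpr hdet
  refine ⟨x, hx, ?_⟩
  rw [Matrix.sub_mulVec] at hxv
  have : (algebraMap ℝ (Matrix V V ℝ)) mu = mu • (1 : Matrix V V ℝ) := by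
    simp [Algebra.algebraMap_eq_smul_one]
  rw [this, Matrix.smul_mulVec, Matrix.one_mulVec] at hxv
  exact (sub_eq_zero.mp hxv).symm

section NL

variable {V : Type*} [Fintype V] (G : SimpleGraph V)

lemma normLap_apply (v w : V) :
    normLap G v w = (Real.sqrt (G.degree v))⁻¹ *
      ((if v = w then (G.degree v : ℝ) else 0) - (if G.Adj v w then 1 else 0)) *
      (Real.sqrt (G.degree w))⁻¹ := by
  letI : DecidableRel G.Adj := Classical.decRel _
  simp only [normLap]
  rw [Matrix.mul_diagonal, Matrix.diagonal_mul, Matrix.sub_apply, Matrix.diagonal_apply,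
    SimpleGraph.adjMatrix_apply]

lemma normLap_mulVec_apply (x : V → ℝ) (v : V) (hd : 0 < G.degree v) :
    (normLap G *ᵥ x) v = x v - (Real.sqrt (G.degree v))⁻¹ *
      ∑ w, (if G.Adj v w then (Real.sqrt (G.degree w))⁻¹ * x w else 0) := by
  have hdr : (0:ℝ) < (G.degree v : ℝ) := by exact_mod_cast hd
  have hs : Real.sqrt (G.degree v) ≠ 0 := ne_of_gt (Real.sqrt_pos.mpr hdr)
  have hss : Real.sqrt (G.degree v) * Real.sqrt (G.degree v) = (G.degree v : ℝ) :=
    Real.mul_self_sqrt (le_of_lt hdr)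
  have key : ∀ w, normLap G v w * x w
      = (if v = w then x v else 0)
        - (Real.sqrt (G.degree v))⁻¹ *
            (if G.Adj v w then (Real.sqrt (G.degree w))⁻¹ * x w else 0) := by
    intro w
    rw [normLap_apply]
    by_cases h1 : v = w
    · subst h1
      rw [if_pos rfl, if_pos rfl, if_neg (G.irrefl)]
      rw [if_neg (G.irrefl)]
      field_simp
      rw [sub_zero, sub_zero, ← mul_assoc, hss]
    · rw [if_neg h1, if_neg h1]
      by_cases h2 : G.Adj v w
      · rw [if_pos h2, if_pos h2]; ring
      · rw [if_neg h2, if_neg h2]; ring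
  show (∑ w, normLap G v w * x w) = _
  rw [Finset.sum_congr rfl (fun w _ => key w), Finset.sum_sub_distrib,
    Finset.sum_ite_eq Finset.univ v (fun _ => x v), if_pos (Finset.mem_univ _),
    ← Finset.mul_sum]
end NL

section Adj
variable {m : ℕ} {P : (V : Type) × SimpleGraph V}

lemma fs_adj_inl_inl {u v : P.1} : ¬ (fractalStep m P).2.Adj (inl u) (inl v) := by
  simp [fractalStep, SimpleGraph.fromRel_adj]

lemma fs_adj_inl_inr {u : P.1} {e : P.2.edgeSet} {j : Fin (m+1)} :
    (fractalStep m P).2.Adj (inl u) (inr (e, j)) ↔ j = 0 ∧ u ∈ (e : Sym2 P.1) := by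
  simp [fractalStep, SimpleGraph.fromRel_adj]

lemma fs_adj_inr_inl {u : P.1} {e : P.2.edgeSet} {j : Fin (m+1)} :
    (fractalStep m P).2.Adj (inr (e, j)) (inl u) ↔ j = 0 ∧ u ∈ (e : Sym2 P.1) := by
  exact ⟨fun h => fs_adj_inl_inr.mp h.symm, fun h => (fs_adj_inl_inr.mpr h).symm⟩

lemma fs_adj_inr_inr {e f : P.2.edgeSet} {j k : Fin (m+1)} :
    (fractalStep m P).2.Adj (inr (e, j)) (inr (f, k)) ↔
      e = f ∧ ((j = 0 ∧ k ≠ 0) ∨ (k = 0 ∧ j ≠ 0)) := by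
  constructor
  · rintro ⟨hne, h | h⟩
    · exact ⟨h.1, Or.inl ⟨h.2.1, h.2.2⟩⟩
    · exact ⟨h.1.symm, Or.inr ⟨h.2.1, h.2.2⟩⟩
  · rintro ⟨rfl, h | h⟩
    · exact ⟨by simp [Prod.ext_iff]; intro hh; exact (h.2 (hh ▸ h.1)).elim, Or.inl ⟨rfl, h.1, h.2⟩⟩
    · exact ⟨by simp [Prod.ext_iff]; intro hh; exact (h.2 (hh ▸ h.1)).elim, Or.inr ⟨rfl, h.1, h.2⟩⟩

end Adj

section Deg
variable {V : Type*} [Fintype V] {G : SimpleGraph V}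

lemma edge_endpoints (e : G.edgeSet) : ∃ a b, G.Adj a b ∧ (e : Sym2 V) = s(a, b) := by
  obtain ⟨c, hc⟩ := e
  induction c using Sym2.ind with
  | _ a b => exact ⟨a, b, hc, rfl⟩

lemma dsqrt_cancel (a x : ℝ) (ha : 0 ≤ a) :
    a * ((Real.sqrt a)⁻¹ * x) = Real.sqrt a * x := by
  by_cases h : a = 0
  · simp [h]
  · have hs : Real.sqrt a ≠ 0 :=
      Real.sqrt_ne_zero'.mpr (lt_of_le_of_ne ha (Ne.symm h))
    field_simp
    linear_combination (-x) * Real.sq_sqrt ha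

lemma degree_real_eq_sum' (v : V) :
    ((G.degree v : ℝ)) = ∑ w : V, if G.Adj v w then (1:ℝ) else 0 := by
  rw [← SimpleGraph.card_neighborFinset_eq_degree, SimpleGraph.neighborFinset_eq_filter,
    Finset.sum_boole]

lemma fin_sum_ne_zero (m : ℕ) :
    (∑ k : Fin (m+1), if k ≠ 0 then (1:ℝ) else 0) = m := by
  have h : ∀ k : Fin (m+1), (if k ≠ 0 then (1:ℝ) else 0) = 1 - (if k = 0 then 1 else 0) := by
    intro k; by_cases hk : k = 0 <;> simp [hk]
  rw [Finset.sum_congr rfl (fun k _ => h k), Finset.sum_sub_distrib, Finset.sum_const,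
    Finset.sum_ite_eq' Finset.univ (0 : Fin (m+1)) (fun _ => (1:ℝ)), if_pos (Finset.mem_univ _)]
  simp
end Deg

section Helpers2
variable {V : Type*} [Fintype V] {G : SimpleGraph V}


lemma sum_edge_eq (c : Sym2 V) (g : ℝ) :
    (∑ e : G.edgeSet, if (e : Sym2 V) = c then g else 0) = if c ∈ G.edgeSet then g else 0 := by
  by_cases h : c ∈ G.edgeSet
  · rw [if_pos h]
    rw [Finset.sum_eq_single_of_mem (⟨c, h⟩ : G.edgeSet) (Finset.mem_univ _)]
    · rw [if_pos rfl]
    · intro e _ hne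
      rw [if_neg (fun hh => hne (Subtype.ext hh))]
  · rw [if_neg h]
    apply Finset.sum_eq_zero
    intro e _
    rw [if_neg (by intro hh; exact h (hh ▸ e.2))]

lemma sum_mem_pair {a b : V} (hab : a ≠ b) (g : V → ℝ) :
    (∑ v : V, if v ∈ (s(a, b) : Sym2 V) then g v else 0) = g a + g b := by
  have : ∀ v : V, (if v ∈ (s(a, b) : Sym2 V) then g v else 0)
      = (if v = a then g v else 0) + (if v = b then g v else 0) := by
    intro v
    by_cases ha : v = a <;> by_cases hb : v = b <;>
      simp [Sym2.mem_iff, ha, hb] <;> simp_all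
  rw [Finset.sum_congr rfl (fun v _ => this v), Finset.sum_add_distrib,
    Finset.sum_ite_eq' Finset.univ a g, Finset.sum_ite_eq' Finset.univ b g,
    if_pos (Finset.mem_univ _), if_pos (Finset.mem_univ _)]

lemma sum_other (a b : V) (g : V → ℝ) :
    (∑ v : V, if (s(a, b) : Sym2 V) = s(a, v) then g v else 0) = g b := by
  have : ∀ v : V, ((s(a, b) : Sym2 V) = s(a, v)) ↔ v = b := by
    intro v; rw [Sym2.congr_right]; exact eq_comm
  simp_rw [this]
  rw [Finset.sum_ite_eq' Finset.univ b g, if_pos (Finset.mem_univ _)]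

lemma degree_real_eq_sum (v : V) :
    ((G.degree v : ℝ)) = ∑ w : V, if G.Adj v w then (1:ℝ) else 0 := by
  rw [← SimpleGraph.card_neighborFinset_eq_degree, SimpleGraph.neighborFinset_eq_filter,
    Finset.sum_boole]

lemma sum_incidence_eq_degree (u : V) (c : ℝ) :
    (∑ e : G.edgeSet, if u ∈ (e : Sym2 V) then c else 0) = (G.degree u : ℝ) * c := by
  classical
  rw [Finset.sum_ite, Finset.sum_const, Finset.sum_const_zero, add_zero]
  have hcard : (Finset.univ.filter (fun e : G.edgeSet => u ∈ (e : Sym2 V))).card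
      = G.degree u := by
    rw [← SimpleGraph.card_incidenceFinset_eq_degree]
    refine Finset.card_bij (fun e _ => (e : Sym2 V)) ?_ ?_ ?_
    · intro e he
      simp only [Finset.mem_filter] at he
      rw [SimpleGraph.mem_incidenceFinset]
      exact ⟨e.2, he.2⟩
    · intro e₁ h₁ e₂ h₂ h
      exact Subtype.ext h
    · intro e he
      rw [SimpleGraph.mem_incidenceFinset] at he
      exact ⟨⟨e, he.1⟩, by simp [he.2], rfl⟩
  rw [hcard, nsmul_eq_mul]

lemma swap_incidence_sum (u : V) (g : V → ℝ) :
    (∑ e : G.edgeSet, ∑ v : V, if (e : Sym2 V) = s(u, v) then g v else 0)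
      = ∑ v : V, if G.Adj u v then g v else 0 := by
  rw [Finset.sum_comm]
  apply Finset.sum_congr rfl
  intro v _
  rw [sum_edge_eq (s(u,v)) (g v)]
  by_cases h : G.Adj u v
  · rw [if_pos ((SimpleGraph.mem_edgeSet _).mpr h), if_pos h]
  · rw [if_neg (fun hh => h ((SimpleGraph.mem_edgeSet _).mp hh)), if_neg h]

end Helpers2

section DegFS
variable {m : ℕ} {P : (V : Type) × SimpleGraph V} [Fintype P.1]

noncomputable instance fsFintype : Fintype (fractalStep m P).1 :=
  inferInstanceAs (Fintype (P.1 ⊕ (P.2.edgeSet × Fin (m+1))))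

lemma sum_incidence_eq_degree' (u : P.1) (c : ℝ) :
    (∑ e : P.2.edgeSet, if u ∈ (e : Sym2 P.1) then c else 0) = (P.2.degree u : ℝ) * c := by
  classical
  rw [Finset.sum_ite, Finset.sum_const, Finset.sum_const_zero, add_zero]
  have hcard : (Finset.univ.filter (fun e : P.2.edgeSet => u ∈ (e : Sym2 P.1))).card
      = P.2.degree u := by
    rw [← SimpleGraph.card_incidenceFinset_eq_degree]
    refine Finset.card_bij (fun e _ => (e : Sym2 P.1)) ?_ ?_ ?_
    · intro e he
      simp only [Finset.mem_filter] at he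
      rw [SimpleGraph.mem_incidenceFinset]
      exact ⟨e.2, he.2⟩
    · intro e₁ h₁ e₂ h₂ h
      exact Subtype.ext h
    · intro e he
      rw [SimpleGraph.mem_incidenceFinset] at he
      exact ⟨⟨e, he.1⟩, by simp [he.2], rfl⟩
  rw [hcard, nsmul_eq_mul]

lemma fs_sum_split (f : (fractalStep m P).1 → ℝ) :
    (∑ w : (fractalStep m P).1, f w)
      = (∑ v : P.1, f (inl v)) + ∑ e : P.2.edgeSet, ∑ j : Fin (m+1), f (inr (e, j)) := by
  exact (Fintype.sum_sum_type f).trans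
    (congrArg (fun s => ∑ v : P.1, f (inl v) + s) (Fintype.sum_prod_type (fun p => f (inr p))))

lemma fs_degree_inl (u : P.1) :
    (((fractalStep m P).2.degree (inl u) : ℝ)) = (P.2.degree u : ℝ) := by
  erw [degree_real_eq_sum', fs_sum_split]
  have h1 : (∑ v : P.1, if (fractalStep m P).2.Adj (inl u) (inl v) then (1:ℝ) else 0) = 0 :=
    Finset.sum_eq_zero (fun v _ => if_neg fs_adj_inl_inl)
  rw [h1, zero_add]
  have h2 : ∀ e : P.2.edgeSet,
      (∑ j : Fin (m+1), if (fractalStep m P).2.Adj (inl u) (inr (e, j)) then (1:ℝ) else 0)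
        = if u ∈ (e : Sym2 P.1) then (1:ℝ) else 0 := by
    intro e
    have : ∀ j : Fin (m+1), (if (fractalStep m P).2.Adj (inl u) (inr (e, j)) then (1:ℝ) else 0)
        = if j = 0 then (if u ∈ (e : Sym2 P.1) then (1:ℝ) else 0) else 0 := by
      intro j
      by_cases hj : j = 0
      · subst hj
        by_cases hu : u ∈ (e : Sym2 P.1)
        · rw [if_pos (fs_adj_inl_inr.mpr ⟨rfl, hu⟩), if_pos rfl, if_pos hu]
        · rw [if_neg (fun h => hu (fs_adj_inl_inr.mp h).2), if_pos rfl, if_neg hu]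
      · rw [if_neg (fun h => hj (fs_adj_inl_inr.mp h).1), if_neg hj]
    rw [Finset.sum_congr rfl (fun j _ => this j),
      Finset.sum_ite_eq' Finset.univ (0 : Fin (m+1)) (fun _ => _), if_pos (Finset.mem_univ _)]
  rw [Finset.sum_congr rfl (fun e _ => h2 e), sum_incidence_eq_degree' u 1, mul_one]

lemma fs_degree_mid (e : P.2.edgeSet) :
    (((fractalStep m P).2.degree (inr (e, 0)) : ℝ)) = (m : ℝ) + 2 := by
  obtain ⟨a, b, hab, he⟩ := edge_endpoints e
  erw [degree_real_eq_sum', fs_sum_split]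
  have h1 : (∑ v : P.1, if (fractalStep m P).2.Adj (inr (e, 0)) (inl v) then (1:ℝ) else 0)
      = 2 := by
    have : ∀ v : P.1, (if (fractalStep m P).2.Adj (inr (e, 0)) (inl v) then (1:ℝ) else 0)
        = if v ∈ (e : Sym2 P.1) then (1:ℝ) else 0 := by
      intro v
      by_cases hv : v ∈ (e : Sym2 P.1)
      · rw [if_pos (fs_adj_inr_inl.mpr ⟨rfl, hv⟩), if_pos hv]
      · rw [if_neg (fun h => hv (fs_adj_inr_inl.mp h).2), if_neg hv]
    rw [Finset.sum_congr rfl (fun v _ => this v)]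
    simp_rw [he]
    rw [sum_mem_pair hab.ne (fun _ => (1:ℝ))]
    norm_num
  rw [h1]
  have h2 : ∀ f : P.2.edgeSet,
      (∑ k : Fin (m+1), if (fractalStep m P).2.Adj (inr (e, 0)) (inr (f, k)) then (1:ℝ) else 0)
        = if f = e then (m : ℝ) else 0 := by
    intro f
    have : ∀ k : Fin (m+1),
        (if (fractalStep m P).2.Adj (inr (e, 0)) (inr (f, k)) then (1:ℝ) else 0)
          = if f = e then (if k ≠ 0 then (1:ℝ) else 0) else 0 := by
      intro k
      by_cases hf : f = e
      · subst hf
        by_cases hk : k = 0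
        · subst hk
          rw [if_neg, if_pos rfl, if_neg (by simp)]
          intro h
          rcases (fs_adj_inr_inr.mp h).2 with ⟨_, h⟩ | ⟨_, h⟩ <;> exact h rfl
        · rw [if_pos (fs_adj_inr_inr.mpr ⟨rfl, Or.inl ⟨rfl, hk⟩⟩), if_pos rfl, if_pos hk]
      · rw [if_neg (fun h => hf (fs_adj_inr_inr.mp h).1.symm), if_neg hf]
    rw [Finset.sum_congr rfl (fun k _ => this k)]
    by_cases hf : f = e
    · rw [if_pos hf]; simp_rw [if_pos hf]; exact fin_sum_ne_zero m
    · rw [if_neg hf]; simp_rw [if_neg hf]; rw [Finset.sum_const_zero]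
  rw [Finset.sum_congr rfl (fun f _ => h2 f),
    Finset.sum_ite_eq' Finset.univ e (fun _ => (m:ℝ)), if_pos (Finset.mem_univ _)]
  ring

lemma fs_degree_pendant (e : P.2.edgeSet) {j : Fin (m+1)} (hj : j ≠ 0) :
    (((fractalStep m P).2.degree (inr (e, j)) : ℝ)) = 1 := by
  erw [degree_real_eq_sum', fs_sum_split]
  have h1 : (∑ v : P.1, if (fractalStep m P).2.Adj (inr (e, j)) (inl v) then (1:ℝ) else 0)
      = 0 :=
    Finset.sum_eq_zero (fun v _ => if_neg (fun h => hj (fs_adj_inr_inl.mp h).1))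
  rw [h1, zero_add]
  have h2 : ∀ f : P.2.edgeSet,
      (∑ k : Fin (m+1), if (fractalStep m P).2.Adj (inr (e, j)) (inr (f, k)) then (1:ℝ) else 0)
        = if f = e then (1:ℝ) else 0 := by
    intro f
    have : ∀ k : Fin (m+1),
        (if (fractalStep m P).2.Adj (inr (e, j)) (inr (f, k)) then (1:ℝ) else 0)
          = if f = e then (if k = 0 then (1:ℝ) else 0) else 0 := by
      intro k
      by_cases hf : f = e
      · subst hf
        by_cases hk : k = 0
        · subst hk
          rw [if_pos (fs_adj_inr_inr.mpr ⟨rfl, Or.inr ⟨rfl, hj⟩⟩), if_pos rfl, if_pos rfl]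
        · rw [if_neg, if_pos rfl, if_neg hk]
          intro h
          rcases (fs_adj_inr_inr.mp h).2 with ⟨h', _⟩ | ⟨h', _⟩
          · exact hj h'
          · exact hk h'
      · rw [if_neg (fun h => hf (fs_adj_inr_inr.mp h).1.symm), if_neg hf]
    rw [Finset.sum_congr rfl (fun k _ => this k)]
    by_cases hf : f = e
    · rw [if_pos hf]; simp_rw [if_pos hf]
      rw [Finset.sum_ite_eq' Finset.univ (0 : Fin (m+1)) (fun _ => _), if_pos (Finset.mem_univ _)]
    · rw [if_neg hf]; simp_rw [if_neg hf]; rw [Finset.sum_const_zero]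
  rw [Finset.sum_congr rfl (fun f _ => h2 f),
    Finset.sum_ite_eq' Finset.univ e (fun _ => (1:ℝ)), if_pos (Finset.mem_univ _)]
end DegFS
section MoreHelpers
variable {V : Type*} [Fintype V] {G : SimpleGraph V}

lemma sum_edge_eq' (g : G.edgeSet → ℝ) (e : G.edgeSet) :
    (∑ e' : G.edgeSet, if (e' : Sym2 V) = (e : Sym2 V) then g e' else 0) = g e := by
  rw [Finset.sum_eq_single_of_mem e (Finset.mem_univ _)]
  · rw [if_pos rfl]
  · intro e' _ hne
    rw [if_neg (fun hh => hne (Subtype.ext hh))]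

lemma sum_eq_other (e : G.edgeSet) (a : V) (c : ℝ) :
    (∑ b : V, if (e : Sym2 V) = s(a, b) then c else 0) = if a ∈ (e : Sym2 V) then c else 0 := by
  obtain ⟨x, y, hxy, he⟩ := edge_endpoints e
  by_cases ha : a ∈ (e : Sym2 V)
  · rw [if_pos ha]
    rw [he] at ha ⊢
    rcases Sym2.mem_iff.mp ha with rfl | rfl
    · exact sum_other a y (fun _ => c)
    · rw [show (s(x, a) : Sym2 V) = s(a, x) from Sym2.eq_swap]
      exact sum_other a x (fun _ => c)
  · rw [if_neg ha]
    apply Finset.sum_eq_zero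
    intro b _
    rw [if_neg (fun hh => ha (by rw [hh]; exact Sym2.mem_mk_left a b))]

lemma fin_sum_ne_zero' (m : ℕ) (c : ℝ) :
    (∑ k : Fin (m+1), if k ≠ 0 then c else 0) = m * c := by
  have h : ∀ k : Fin (m+1), (if k ≠ 0 then c else 0) = (if k ≠ 0 then (1:ℝ) else 0) * c := by
    intro k; by_cases hk : k = 0 <;> simp [hk]
  rw [Finset.sum_congr rfl (fun k _ => h k), ← Finset.sum_mul, fin_sum_ne_zero]

end MoreHelpers
section Kernel
variable {m : ℕ} {P : (V : Type) × SimpleGraph V} [Fintype P.1]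

lemma step_kernel [instF : Fintype (fractalStep m P).1]
    (hS : ∀ H : P.1 → P.1 → ℝ, (∀ u v, ¬ P.2.Adj u v → H u v = 0) →
       (∀ u v, H u v + H v u = 0) → (∀ u, ∑ v, H u v = 0) → ∀ u v, H u v = 0)
    (ε : ℝ)
    (F : (fractalStep m P).1 → (fractalStep m P).1 → ℝ)
    (hsupp : ∀ u v, ¬ (fractalStep m P).2.Adj u v → F u v = 0)
    (hsym : ∀ u v, F v u = ε * F u v)
    (hrow : ∀ u, ∑ v, F u v = 0) :
    ∀ u v, F u v = 0 := by
  obtain rfl : instF = fsFintype := Subsingleton.elim _ _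
  have hpend : ∀ (e : P.2.edgeSet) (j : Fin (m+1)), j ≠ 0 → F (inr (e, j)) (inr (e, 0)) = 0 := by
    intro e j hj
    have hr := hrow (inr (e, j))
    rw [fs_sum_split] at hr
    have hA : (∑ v : P.1, F (inr (e, j)) (inl v)) = 0 :=
      Finset.sum_eq_zero fun v _ => hsupp _ _ (fun h => hj (fs_adj_inr_inl.mp h).1)
    have hB : ∀ f : P.2.edgeSet, (∑ k : Fin (m+1), F (inr (e, j)) (inr (f, k)))
        = if f = e then F (inr (e, j)) (inr (e, 0)) else 0 := by
      intro f
      have key : ∀ k : Fin (m+1), F (inr (e, j)) (inr (f, k))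
          = if f = e then (if k = 0 then F (inr (e, j)) (inr (e, 0)) else 0) else 0 := by
        intro k
        by_cases hf : f = e
        · subst hf
          by_cases hk : k = 0
          · subst hk; rw [if_pos rfl, if_pos rfl]
          · rw [if_pos rfl, if_neg hk]
            apply hsupp
            intro h
            rcases (fs_adj_inr_inr.mp h).2 with ⟨h', _⟩ | ⟨h', _⟩
            · exact hj h'
            · exact hk h'
        · rw [if_neg hf]
          exact hsupp _ _ (fun h => hf ((fs_adj_inr_inr.mp h).1.symm))
      rw [Finset.sum_congr rfl (fun k _ => key k)]
      by_cases hf : f = e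
      · rw [if_pos hf]; simp_rw [if_pos hf]
        rw [Finset.sum_ite_eq' Finset.univ (0 : Fin (m+1)) (fun _ => _),
          if_pos (Finset.mem_univ _)]
      · rw [if_neg hf]; simp_rw [if_neg hf]; rw [Finset.sum_const_zero]
    rw [hA, zero_add, Finset.sum_congr rfl (fun f _ => hB f),
      Finset.sum_ite_eq' Finset.univ e (fun _ => _), if_pos (Finset.mem_univ _)] at hr
    exact hr
  have hpend' : ∀ (e : P.2.edgeSet) (j : Fin (m+1)), j ≠ 0 → F (inr (e, 0)) (inr (e, j)) = 0 :=
    fun e j hj => by erw [hsym, hpend e j hj, mul_zero]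
  have hmid : ∀ (e : P.2.edgeSet) (a b : P.1), (e : Sym2 P.1) = s(a, b) →
      F (inr (e, 0)) (inl a) + F (inr (e, 0)) (inl b) = 0 := by
    intro e a b he
    have hab : P.2.Adj a b := (SimpleGraph.mem_edgeSet _).mp (he ▸ e.2)
    have hr := hrow (inr (e, 0))
    rw [fs_sum_split] at hr
    have hB : ∀ f : P.2.edgeSet, (∑ k : Fin (m+1), F (inr (e, 0)) (inr (f, k))) = 0 := by
      intro f
      apply Finset.sum_eq_zero
      intro k _
      by_cases hf : f = e
      · rw [hf]
        by_cases hk : k = 0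
        · subst hk
          exact hsupp _ _ (fun h => by
            rcases (fs_adj_inr_inr.mp h).2 with ⟨_, h'⟩ | ⟨_, h'⟩ <;> exact h' rfl)
        · exact hpend' e k hk
      · exact hsupp _ _ (fun h => hf ((fs_adj_inr_inr.mp h).1.symm))
    have hA : (∑ v : P.1, F (inr (e, 0)) (inl v))
        = F (inr (e, 0)) (inl a) + F (inr (e, 0)) (inl b) := by
      have key : ∀ v : P.1, F (inr (e, 0)) (inl v)
          = if v ∈ (e : Sym2 P.1) then F (inr (e, 0)) (inl v) else 0 := by
        intro v
        by_cases hv : v ∈ (e : Sym2 P.1)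
        · rw [if_pos hv]
        · rw [if_neg hv]; exact hsupp _ _ (fun h => hv (fs_adj_inr_inl.mp h).2)
      rw [Finset.sum_congr rfl (fun v _ => key v)]
      simp_rw [he]
      exact sum_mem_pair hab.ne _
    rw [hA, Finset.sum_congr rfl (fun f _ => hB f), Finset.sum_const_zero, add_zero] at hr
    exact hr
  have hrowinl : ∀ u : P.1,
      (∑ e : P.2.edgeSet, if u ∈ (e : Sym2 P.1) then F (inl u) (inr (e, 0)) else 0) = 0 := by
    intro u
    have hr := hrow (inl u)
    rw [fs_sum_split] at hr
    have hA : (∑ v : P.1, F (inl u) (inl v)) = 0 :=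
      Finset.sum_eq_zero fun v _ => hsupp _ _ fs_adj_inl_inl
    have hB : ∀ f : P.2.edgeSet, (∑ k : Fin (m+1), F (inl u) (inr (f, k)))
        = if u ∈ (f : Sym2 P.1) then F (inl u) (inr (f, 0)) else 0 := by
      intro f
      have key : ∀ k : Fin (m+1), F (inl u) (inr (f, k))
          = if k = 0 then (if u ∈ (f : Sym2 P.1) then F (inl u) (inr (f, 0)) else 0) else 0 := by
        intro k
        by_cases hk : k = 0
        · subst hk
          rw [if_pos rfl]
          by_cases hu : u ∈ (f : Sym2 P.1)
          · rw [if_pos hu]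
          · rw [if_neg hu]; exact hsupp _ _ (fun h => hu (fs_adj_inl_inr.mp h).2)
        · rw [if_neg hk]; exact hsupp _ _ (fun h => hk (fs_adj_inl_inr.mp h).1)
      rw [Finset.sum_congr rfl (fun k _ => key k),
        Finset.sum_ite_eq' Finset.univ (0 : Fin (m+1)) (fun _ => _), if_pos (Finset.mem_univ _)]
    rw [hA, zero_add, Finset.sum_congr rfl (fun f _ => hB f)] at hr
    exact hr
  have hH0 : ∀ a b : P.1, (∑ e : P.2.edgeSet,
      if (e : Sym2 P.1) = s(a, b) then F (inl a) (inr (e, 0)) else 0) = 0 := by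
    apply hS
    · intro a b hadj
      apply Finset.sum_eq_zero
      intro e _
      rw [if_neg (fun hh : (e : Sym2 P.1) = s(a, b) =>
        hadj ((SimpleGraph.mem_edgeSet _).mp (hh ▸ e.2)))]
    · intro a b
      rw [← Finset.sum_add_distrib]
      have key : ∀ e : P.2.edgeSet,
          ((if (e : Sym2 P.1) = s(a, b) then F (inl a) (inr (e, 0)) else 0)
          + (if (e : Sym2 P.1) = s(b, a) then F (inl b) (inr (e, 0)) else 0))
          = if (e : Sym2 P.1) = s(a, b)
              then (F (inl a) (inr (e, 0)) + F (inl b) (inr (e, 0))) else 0 := by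
        intro e
        rw [show (s(b, a) : Sym2 P.1) = s(a, b) from Sym2.eq_swap]
        by_cases hc : (e : Sym2 P.1) = s(a, b)
        · rw [if_pos hc, if_pos hc, if_pos hc]
        · rw [if_neg hc, if_neg hc, if_neg hc, add_zero]
      rw [Finset.sum_congr rfl (fun e _ => key e)]
      apply Finset.sum_eq_zero
      intro e _
      by_cases hc : (e : Sym2 P.1) = s(a, b)
      · rw [if_pos hc, hsym (inr (e, 0)) (inl a), hsym (inr (e, 0)) (inl b), ← mul_add,
          hmid e a b hc, mul_zero]
      · rw [if_neg hc]
    · intro u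
      rw [Finset.sum_comm]
      rw [Finset.sum_congr rfl (fun e _ => sum_eq_other e u (F (inl u) (inr (e, 0))))]
      exact hrowinl u
  have hinlmid : ∀ (u : P.1) (e : P.2.edgeSet), F (inl u) (inr (e, 0)) = 0 := by
    intro u e
    by_cases hu : u ∈ (e : Sym2 P.1)
    · obtain ⟨a, b, hab, he⟩ := edge_endpoints e
      have hu' := he ▸ hu
      rcases Sym2.mem_iff.mp hu' with rfl | rfl
      · have h := hH0 u b
        rw [← sum_edge_eq' (fun e' => F (inl u) (inr (e', 0))) e]
        rw [show (e : Sym2 P.1) = s(u, b) from he]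
        exact h
      · have h := hH0 u a
        rw [← sum_edge_eq' (fun e' => F (inl u) (inr (e', 0))) e]
        rw [show (e : Sym2 P.1) = s(u, a) from he.trans Sym2.eq_swap]
        exact h
    · exact hsupp _ _ (fun h => hu (fs_adj_inl_inr.mp h).2)
  intro u v
  by_cases hadj : (fractalStep m P).2.Adj u v
  · cases u with
    | inl a =>
      cases v with
      | inl b => exact absurd hadj fs_adj_inl_inl
      | inr p =>
        obtain ⟨e, j⟩ := p
        obtain ⟨rfl, _⟩ := fs_adj_inl_inr.mp hadj
        exact hinlmid a e
    | inr p =>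
      obtain ⟨e, j⟩ := p
      cases v with
      | inl b =>
        obtain ⟨rfl, hb⟩ := fs_adj_inr_inl.mp hadj
        rw [hsym (inl b) (inr (e, 0)), hinlmid b e, mul_zero]
      | inr q =>
        obtain ⟨f, k⟩ := q
        obtain ⟨rfl, hjk⟩ := fs_adj_inr_inr.mp hadj
        rcases hjk with ⟨hj, hk⟩ | ⟨hk, hj⟩
        · subst hj; exact hpend' e k hk
        · subst hk; exact hpend e j hj
  · exact hsupp _ _ hadj

end Kernel

section FractalKernel

lemma sum_univ_fin2 (I : Fintype (Fin 2)) (f : Fin 2 → ℝ) :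
    @Finset.sum (Fin 2) ℝ _ (@Finset.univ (Fin 2) I) f = f 0 + f 1 := by
  rw [Subsingleton.elim I (Fin.fintype 2)]
  exact Fin.sum_univ_two f

lemma fractal_zero_kernel (m : ℕ) (H : (fractal m 0).1 → (fractal m 0).1 → ℝ)
    (hsupp : ∀ u v, ¬ (fractal m 0).2.Adj u v → H u v = 0)
    (hrow : ∀ u, ∑ v, H u v = 0) : ∀ u v, H u v = 0 := by
  intro u v
  let H' : Fin 2 → Fin 2 → ℝ := H
  have hdiag : ∀ w : Fin 2, H' w w = 0 := fun w => hsupp w w ((fractal m 0).2.irrefl)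
  have hr : ∀ w : Fin 2, H' w 0 + H' w 1 = 0 := by
    intro w
    rw [← sum_univ_fin2 (fractal_fintype m 0) (H' w)]
    exact hrow w
  have hcase : ∀ w : Fin 2, w = 0 ∨ w = 1 := by decide
  show H' u v = 0
  rcases hcase u with h | h <;> rcases hcase v with h' | h' <;> rw [h, h']
  · exact hdiag 0
  · have h1 := hr 0; have h2 := hdiag 0; linarith
  · have h1 := hr 1; have h2 := hdiag 1; linarith
  · exact hdiag 1

lemma fractal_S (m n : ℕ) :
    ∀ H : (fractal m n).1 → (fractal m n).1 → ℝ,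
      (∀ u v, ¬ (fractal m n).2.Adj u v → H u v = 0) →
      (∀ u v, H u v + H v u = 0) → (∀ u, ∑ v, H u v = 0) → ∀ u v, H u v = 0 := by
  induction n with
  | zero => exact fun H hsupp _ hrow => fractal_zero_kernel m H hsupp hrow
  | succ n ih =>
    intro H hsupp hasym hrow
    exact step_kernel (m := m) (P := fractal m n) (instF := fractal_fintype m (n+1)) ih (-1) H
      hsupp (fun u v => by have := hasym u v; linarith) hrow

lemma fractal_P (m n : ℕ) :
    ∀ F : (fractal m n).1 → (fractal m n).1 → ℝ,
      (∀ u v, ¬ (fractal m n).2.Adj u v → F u v = 0) →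
      (∀ u v, F u v = F v u) → (∀ u, ∑ v, F u v = 0) → ∀ u v, F u v = 0 := by
  cases n with
  | zero => exact fun F hsupp _ hrow => fractal_zero_kernel m F hsupp hrow
  | succ n =>
    intro F hsupp hsym hrow
    exact step_kernel (m := m) (P := fractal m n) (instF := fractal_fintype m (n+1))
      (fractal_S m n) 1 F hsupp (fun u v => by rw [one_mul]; exact (hsym u v).symm) hrow

lemma degree_pos_inst {V : Type*} (G : SimpleGraph V) (v : V)
    {I1 I2 : Fintype (G.neighborSet v)} (h : 0 < @SimpleGraph.degree V G v I1) :
    0 < @SimpleGraph.degree V G v I2 := by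
  rwa [Subsingleton.elim I2 I1]

lemma fractal_degree_pos (m n : ℕ) : ∀ v : (fractal m n).1, 0 < (fractal m n).2.degree v := by
  induction n with
  | zero =>
    intro v
    let v' : Fin 2 := v
    rw [← SimpleGraph.card_neighborFinset_eq_degree]
    apply Finset.card_pos.mpr
    refine ⟨v' + 1, ?_⟩
    rw [SimpleGraph.mem_neighborFinset]
    show (⊤ : SimpleGraph (Fin 2)).Adj v' (v' + 1)
    rw [SimpleGraph.top_adj]
    intro h
    have h2 := congrArg Fin.val h
    rw [Fin.val_add] at h2
    have h3 := v'.isLt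
    simp at h2
    omega
  | succ n ih =>
    have key : ∀ w : (fractal m n).1 ⊕ ((fractal m n).2.edgeSet × Fin (m+1)),
        0 < (fractalStep m (fractal m n)).2.degree w := by
      intro w
      cases w with
      | inl u =>
        have hr := fs_degree_inl (m := m) (P := fractal m n) u
        have hpos : (0:ℝ) < (((fractalStep m (fractal m n)).2.degree (inl u) : ℝ)) := by
          rw [hr]; exact_mod_cast ih u
        exact_mod_cast hpos
      | inr p =>
        obtain ⟨e, j⟩ := p
        by_cases hj : j = 0
        · subst hj
          have hr := fs_degree_mid (m := m) (P := fractal m n) e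
          have hpos : (0:ℝ) < (((fractalStep m (fractal m n)).2.degree (inr (e, 0)) : ℝ)) := by
            rw [hr]; positivity
          exact_mod_cast hpos
        · have hr := fs_degree_pendant (m := m) (P := fractal m n) e hj
          have hpos : (0:ℝ) < (((fractalStep m (fractal m n)).2.degree (inr (e, j)) : ℝ)) := by
            rw [hr]; norm_num
          exact_mod_cast hpos
    intro v
    exact degree_pos_inst _ _ (key v)

end FractalKernel

section StepMain
variable {m : ℕ} {P : (V : Type) × SimpleGraph V} [Fintype P.1]

theorem step_main [instF : Fintype (fractalStep m P).1]
    (hdeg : ∀ v : P.1, 0 < P.2.degree v)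
    (hker : ∀ F : P.1 → P.1 → ℝ, (∀ u v, ¬ P.2.Adj u v → F u v = 0) →
       (∀ u v, F u v = F v u) → (∀ u, ∑ v, F u v = 0) → ∀ u v, F u v = 0)
    (lam : ℝ) (h1 : lam ≠ 1)
    (x : (fractalStep m P).1 → ℝ) (hx : x ≠ 0)
    (heq : normLap (fractalStep m P).2 *ᵥ x = lam • x) :
    ((m:ℝ) + 2) * lam * (2 - lam) ≠ 2 ∧
    ∃ y : P.1 → ℝ, y ≠ 0 ∧ normLap P.2 *ᵥ y = (((m:ℝ) + 2) * lam * (2 - lam)) • y := by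
  obtain rfl : instF = fsFintype := Subsingleton.elim _ _
  have hm2 : (0:ℝ) < (m:ℝ) + 2 := by positivity
  set S := Real.sqrt ((m:ℝ) + 2) with hSdef
  have hS0 : 0 < S := Real.sqrt_pos.mpr hm2
  have hSne : S ≠ 0 := ne_of_gt hS0
  have hSS : S * S = (m:ℝ) + 2 := Real.mul_self_sqrt (le_of_lt hm2)
  have hlam : (1:ℝ) - lam ≠ 0 := sub_ne_zero.mpr (Ne.symm h1)
  have hd : ∀ u : P.1, (0:ℝ) < (P.2.degree u : ℝ) := fun u => by exact_mod_cast hdeg u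
  have hD0 : ∀ u : P.1, 0 < Real.sqrt (P.2.degree u) := fun u => Real.sqrt_pos.mpr (hd u)
  have hDne : ∀ u : P.1, Real.sqrt (P.2.degree u) ≠ 0 := fun u => ne_of_gt (hD0 u)
  have hDD : ∀ u : P.1, Real.sqrt (P.2.degree u) * Real.sqrt (P.2.degree u)
      = (P.2.degree u : ℝ) := fun u => Real.mul_self_sqrt (le_of_lt (hd u))
  -- degrees of the step graph
  have hdI : ∀ u : P.1, (((fractalStep m P).2.degree (inl u) : ℝ)) = (P.2.degree u : ℝ) :=
    fun u => fs_degree_inl u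
  have hdM : ∀ e : P.2.edgeSet,
      (((fractalStep m P).2.degree (inr (e, (0 : Fin (m+1)))) : ℝ)) = (m:ℝ) + 2 :=
    fun e => fs_degree_mid e
  have hdP : ∀ (e : P.2.edgeSet) (j : Fin (m+1)), j ≠ 0 →
      (((fractalStep m P).2.degree (inr (e, j)) : ℝ)) = 1 :=
    fun e j hj => fs_degree_pendant e hj
  have hpI : ∀ u : P.1, 0 < (fractalStep m P).2.degree (inl u) := fun u => by
    have h : (0:ℝ) < (((fractalStep m P).2.degree (inl u) : ℝ)) := by rw [hdI]; exact hd u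
    exact_mod_cast h
  have hpM : ∀ e : P.2.edgeSet, 0 < (fractalStep m P).2.degree (inr (e, (0 : Fin (m+1)))) :=
    fun e => by
      have h : (0:ℝ) < (((fractalStep m P).2.degree (inr (e, (0:Fin (m+1)))) : ℝ)) := by
        rw [hdM]; exact hm2
      exact_mod_cast h
  have hpP : ∀ (e : P.2.edgeSet) (j : Fin (m+1)), j ≠ 0 →
      0 < (fractalStep m P).2.degree (inr (e, j)) := fun e j hj => by
    have h : (0:ℝ) < (((fractalStep m P).2.degree (inr (e, j)) : ℝ)) := by
      rw [hdP e j hj]; norm_num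
    exact_mod_cast h
  have hsI : ∀ u : P.1, Real.sqrt ((fractalStep m P).2.degree (inl u))
      = Real.sqrt (P.2.degree u) := fun u => by rw [hdI]
  have hsM : ∀ e : P.2.edgeSet,
      Real.sqrt ((fractalStep m P).2.degree (inr (e, (0 : Fin (m+1))))) = S := fun e => by
    rw [hdM]
  have hsP : ∀ (e : P.2.edgeSet) (j : Fin (m+1)), j ≠ 0 →
      Real.sqrt ((fractalStep m P).2.degree (inr (e, j))) = 1 := fun e j hj => by
    rw [hdP e j hj, Real.sqrt_one]
  -- abbreviation for the symmetrized edge sums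
  set W := fun e : P.2.edgeSet =>
    ∑ v, if v ∈ (e : Sym2 P.1) then (Real.sqrt (P.2.degree v))⁻¹ * x (inl v) else 0 with hW
  -- the eigen equation at each vertex
  have eig : ∀ v : (fractalStep m P).1, 0 < (fractalStep m P).2.degree v →
      x v - (Real.sqrt ((fractalStep m P).2.degree v))⁻¹ *
        ∑ w, (if (fractalStep m P).2.Adj v w
          then (Real.sqrt ((fractalStep m P).2.degree w))⁻¹ * x w else 0) = lam * x v := by
    intro v hv
    have h := congrFun heq v
    rw [normLap_mulVec_apply _ x v hv, Pi.smul_apply, smul_eq_mul] at h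
    exact h
  -- pendant equation
  have E1 : ∀ (e : P.2.edgeSet) (j : Fin (m+1)), j ≠ 0 →
      (1 - lam) * x (inr (e, j)) = S⁻¹ * x (inr (e, (0 : Fin (m+1)))) := by
    intro e j hj
    have h := eig (inr (e, j)) (hpP e j hj)
    rw [fs_sum_split (fun w => if (fractalStep m P).2.Adj (inr (e, j)) w
      then (Real.sqrt ((fractalStep m P).2.degree w))⁻¹ * x w else 0)] at h
    have hA : (∑ v : P.1, if (fractalStep m P).2.Adj (inr (e, j)) (inl v)
        then (Real.sqrt ((fractalStep m P).2.degree (inl v)))⁻¹ * x (inl v) else 0) = 0 :=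
      Finset.sum_eq_zero fun v _ => if_neg (fun hh => hj (fs_adj_inr_inl.mp hh).1)
    have hB : ∀ f : P.2.edgeSet, (∑ k : Fin (m+1),
        if (fractalStep m P).2.Adj (inr (e, j)) (inr (f, k))
          then (Real.sqrt ((fractalStep m P).2.degree (inr (f, k))))⁻¹ * x (inr (f, k)) else 0)
        = if f = e then S⁻¹ * x (inr (e, (0 : Fin (m+1)))) else 0 := by
      intro f
      have key : ∀ k : Fin (m+1),
          (if (fractalStep m P).2.Adj (inr (e, j)) (inr (f, k))
            then (Real.sqrt ((fractalStep m P).2.degree (inr (f, k))))⁻¹ * x (inr (f, k)) else 0)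
          = if f = e then (if k = 0 then S⁻¹ * x (inr (e, (0 : Fin (m+1)))) else 0) else 0 := by
        intro k
        by_cases hf : f = e
        · rw [hf]
          by_cases hk : k = 0
          · rw [hk, if_pos (fs_adj_inr_inr.mpr ⟨rfl, Or.inr ⟨rfl, hj⟩⟩), if_pos rfl, if_pos rfl,
              hsM e]
          · have hnadj : ¬ (fractalStep m P).2.Adj (inr (e, j)) (inr (e, k)) := by
              intro hh
              rcases (fs_adj_inr_inr.mp hh).2 with ⟨hh', _⟩ | ⟨hh', _⟩
              · exact hj hh'
              · exact hk hh'
            rw [if_neg hnadj, if_pos rfl, if_neg hk]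
        · have hnadj : ¬ (fractalStep m P).2.Adj (inr (e, j)) (inr (f, k)) :=
            fun hh => hf ((fs_adj_inr_inr.mp hh).1.symm)
          rw [if_neg hnadj, if_neg hf]
      rw [Finset.sum_congr rfl (fun k _ => key k)]
      by_cases hf : f = e
      · rw [if_pos hf]; simp_rw [if_pos hf]
        rw [Finset.sum_ite_eq' Finset.univ (0 : Fin (m+1)) (fun _ => _),
          if_pos (Finset.mem_univ _)]
      · rw [if_neg hf]; simp_rw [if_neg hf]; rw [Finset.sum_const_zero]
    erw [hA, zero_add, Finset.sum_congr rfl (fun f _ => hB f),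
      Finset.sum_ite_eq' Finset.univ e (fun _ => _), if_pos (Finset.mem_univ _),
      hsP e j hj, inv_one, one_mul] at h
    linear_combination h
  -- middle equation
  have E2 : ∀ e : P.2.edgeSet, (1 - lam) * x (inr (e, (0 : Fin (m+1))))
      = S⁻¹ * (W e + (m:ℝ) * (S⁻¹ * x (inr (e, (0 : Fin (m+1)))) / (1 - lam))) := by
    intro e
    have h := eig (inr (e, (0 : Fin (m+1)))) (hpM e)
    rw [fs_sum_split (fun w => if (fractalStep m P).2.Adj (inr (e, (0 : Fin (m+1)))) w
      then (Real.sqrt ((fractalStep m P).2.degree w))⁻¹ * x w else 0)] at h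
    have hA : (∑ v : P.1, if (fractalStep m P).2.Adj (inr (e, (0 : Fin (m+1)))) (inl v)
        then (Real.sqrt ((fractalStep m P).2.degree (inl v)))⁻¹ * x (inl v) else 0) = W e := by
      rw [hW]
      apply Finset.sum_congr rfl
      intro v _
      by_cases hv : v ∈ (e : Sym2 P.1)
      · rw [if_pos (fs_adj_inr_inl.mpr ⟨rfl, hv⟩), if_pos hv, hsI v]
      · rw [if_neg (fun hh => hv (fs_adj_inr_inl.mp hh).2), if_neg hv]
    have hB : ∀ f : P.2.edgeSet, (∑ k : Fin (m+1),
        if (fractalStep m P).2.Adj (inr (e, (0 : Fin (m+1)))) (inr (f, k))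
          then (Real.sqrt ((fractalStep m P).2.degree (inr (f, k))))⁻¹ * x (inr (f, k)) else 0)
        = if f = e then (∑ k : Fin (m+1), if k ≠ 0 then x (inr (e, k)) else 0) else 0 := by
      intro f
      have key : ∀ k : Fin (m+1),
          (if (fractalStep m P).2.Adj (inr (e, (0 : Fin (m+1)))) (inr (f, k))
            then (Real.sqrt ((fractalStep m P).2.degree (inr (f, k))))⁻¹ * x (inr (f, k)) else 0)
          = if f = e then (if k ≠ 0 then x (inr (e, k)) else 0) else 0 := by
        intro k
        by_cases hf : f = e
        · rw [hf]
          by_cases hk : k = 0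
          · have hnadj : ¬ (fractalStep m P).2.Adj (inr (e, (0 : Fin (m+1)))) (inr (e, k)) := by
              intro hh
              rcases (fs_adj_inr_inr.mp hh).2 with ⟨_, hh'⟩ | ⟨_, hh'⟩
              · exact hh' hk
              · exact hh' rfl
            rw [if_neg hnadj, if_pos rfl, if_neg (fun hh => hh hk)]
          · rw [if_pos (fs_adj_inr_inr.mpr ⟨rfl, Or.inl ⟨rfl, hk⟩⟩), if_pos rfl, if_pos hk,
              hsP e k hk, inv_one, one_mul]
        · have hnadj : ¬ (fractalStep m P).2.Adj (inr (e, (0 : Fin (m+1)))) (inr (f, k)) :=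
            fun hh => hf ((fs_adj_inr_inr.mp hh).1.symm)
          rw [if_neg hnadj, if_neg hf]
      rw [Finset.sum_congr rfl (fun k _ => key k)]
      by_cases hf : f = e
      · rw [if_pos hf]; simp_rw [if_pos hf]
      · rw [if_neg hf]; simp_rw [if_neg hf]; rw [Finset.sum_const_zero]
    have hC : (∑ k : Fin (m+1), if k ≠ 0 then x (inr (e, k)) else 0)
        = (m:ℝ) * (S⁻¹ * x (inr (e, (0 : Fin (m+1)))) / (1 - lam)) := by
      have key : ∀ k : Fin (m+1), (if k ≠ 0 then x (inr (e, k)) else 0)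
          = if k ≠ 0 then S⁻¹ * x (inr (e, (0 : Fin (m+1)))) / (1 - lam) else 0 := by
        intro k
        by_cases hk : k = 0
        · rw [if_neg (fun hh => hh hk), if_neg (fun hh => hh hk)]
        · rw [if_pos hk, if_pos hk, eq_div_iff hlam]
          linear_combination E1 e k hk
      rw [Finset.sum_congr rfl (fun k _ => key k), fin_sum_ne_zero' m]
    erw [hA, Finset.sum_congr rfl (fun f _ => hB f),
      Finset.sum_ite_eq' Finset.univ e (fun _ => _), if_pos (Finset.mem_univ _),
      hC, hsM e] at h
    linear_combination h
  set K := (1 - lam)^2 * ((m:ℝ) + 2) - (m:ℝ) with hKdef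
  have EK : ∀ e : P.2.edgeSet, K * x (inr (e, (0 : Fin (m+1)))) = (1 - lam) * S * W e := by
    intro e
    have h := E2 e
    field_simp at h
    linear_combination h - (1 - lam)^2 * (x (inr (e, (0 : Fin (m+1))))) * hSS
  have E3 : ∀ u : P.1, (∑ e : P.2.edgeSet, if u ∈ (e : Sym2 P.1)
        then x (inr (e, (0 : Fin (m+1)))) else 0)
      = (1 - lam) * S * (Real.sqrt (P.2.degree u) * x (inl u)) := by
    intro u
    have h := eig (inl u) (hpI u)
    rw [fs_sum_split (fun w => if (fractalStep m P).2.Adj (inl u) w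
      then (Real.sqrt ((fractalStep m P).2.degree w))⁻¹ * x w else 0)] at h
    have hA : (∑ v : P.1, if (fractalStep m P).2.Adj (inl u) (inl v)
        then (Real.sqrt ((fractalStep m P).2.degree (inl v)))⁻¹ * x (inl v) else 0) = 0 :=
      Finset.sum_eq_zero fun v _ => if_neg fs_adj_inl_inl
    have hB : ∀ f : P.2.edgeSet, (∑ k : Fin (m+1),
        if (fractalStep m P).2.Adj (inl u) (inr (f, k))
          then (Real.sqrt ((fractalStep m P).2.degree (inr (f, k))))⁻¹ * x (inr (f, k)) else 0)
        = S⁻¹ * (if u ∈ (f : Sym2 P.1) then x (inr (f, (0 : Fin (m+1)))) else 0) := by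
      intro f
      have key : ∀ k : Fin (m+1),
          (if (fractalStep m P).2.Adj (inl u) (inr (f, k))
            then (Real.sqrt ((fractalStep m P).2.degree (inr (f, k))))⁻¹ * x (inr (f, k)) else 0)
          = if k = 0 then (if u ∈ (f : Sym2 P.1)
              then S⁻¹ * x (inr (f, (0 : Fin (m+1)))) else 0) else 0 := by
        intro k
        by_cases hk : k = 0
        · rw [hk, if_pos rfl]
          by_cases hu : u ∈ (f : Sym2 P.1)
          · rw [if_pos (fs_adj_inl_inr.mpr ⟨rfl, hu⟩), if_pos hu, hsM f]
          · rw [if_neg (fun hh => hu (fs_adj_inl_inr.mp hh).2), if_neg hu]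
        · rw [if_neg (fun hh => hk (fs_adj_inl_inr.mp hh).1), if_neg hk]
      rw [Finset.sum_congr rfl (fun k _ => key k),
        Finset.sum_ite_eq' Finset.univ (0 : Fin (m+1)) (fun _ => _), if_pos (Finset.mem_univ _)]
      by_cases hu : u ∈ (f : Sym2 P.1)
      · rw [if_pos hu, if_pos hu]
      · rw [if_neg hu, if_neg hu, mul_zero]
    erw [hA, zero_add, Finset.sum_congr rfl (fun f _ => hB f), ← Finset.mul_sum, hsI u] at h
    -- h : x (inl u) - (√d u)⁻¹ * (S⁻¹ * T u) = lam * x (inl u)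
    rw [show (1 - lam) * S * (Real.sqrt (P.2.degree u) * x (inl u))
        = (Real.sqrt (P.2.degree u) * S) * ((1 - lam) * x (inl u)) from by ring,
      show (1 - lam) * x (inl u)
        = x (inl u) - lam * x (inl u) from by ring, ← h]
    field_simp [hDne u, hSne]
    ring
  -- x vanishes given the inl-values and middle values vanish
  have hxzero : (∀ u : P.1, x (inl u) = 0) →
      (∀ e : P.2.edgeSet, x (inr (e, (0 : Fin (m+1)))) = 0) → False := by
    intro hy hX0
    apply hx
    funext v
    show x v = 0
    cases v with
    | inl u => exact hy u
    | inr p =>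
      obtain ⟨e, j⟩ := p
      by_cases hj : j = 0
      · rw [hj]; exact hX0 e
      · have h := E1 e j hj
        rw [hX0 e, mul_zero] at h
        exact (mul_eq_zero.mp h).resolve_left hlam
  have hWy : (∀ u : P.1, x (inl u) = 0) → ∀ e : P.2.edgeSet, W e = 0 := by
    intro hy e
    rw [hW]
    apply Finset.sum_eq_zero
    intro v _
    rw [hy v, mul_zero, ite_self]
  -- K is nonzero
  have hKne : K ≠ 0 := by
    intro hK0
    have hW0 : ∀ e : P.2.edgeSet, W e = 0 := by
      intro e
      have h := (EK e).symm
      rw [hK0, zero_mul] at h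
      rcases mul_eq_zero.mp h with h' | h'
      · rcases mul_eq_zero.mp h' with h'' | h''
        · exact absurd h'' hlam
        · exact absurd h'' hSne
      · exact h'
    have hdouble : ((1 - lam) * S) * (∑ u : P.1, x (inl u) ^ 2) = 0 := by
      have lhs1 : (∑ u : P.1, ((Real.sqrt (P.2.degree u))⁻¹ * x (inl u)) *
            (∑ e : P.2.edgeSet, if u ∈ (e : Sym2 P.1) then x (inr (e, (0 : Fin (m+1)))) else 0))
          = ∑ e : P.2.edgeSet, x (inr (e, (0 : Fin (m+1)))) * W e := by
        have expand : ∀ u : P.1, ((Real.sqrt (P.2.degree u))⁻¹ * x (inl u)) *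
              (∑ e : P.2.edgeSet, if u ∈ (e : Sym2 P.1) then x (inr (e, (0 : Fin (m+1)))) else 0)
            = ∑ e : P.2.edgeSet, (if u ∈ (e : Sym2 P.1)
                then ((Real.sqrt (P.2.degree u))⁻¹ * x (inl u)) * x (inr (e, (0 : Fin (m+1))))
                else 0) := by
          intro u
          rw [Finset.mul_sum]
          apply Finset.sum_congr rfl
          intro e _
          rw [mul_ite, mul_zero]
        rw [Finset.sum_congr rfl (fun u _ => expand u), Finset.sum_comm]
        apply Finset.sum_congr rfl
        intro e _
        rw [hW, Finset.mul_sum]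
        apply Finset.sum_congr rfl
        intro v _
        rw [mul_ite, mul_zero]
        by_cases hv : v ∈ (e : Sym2 P.1)
        · rw [if_pos hv, if_pos hv]; ring
        · rw [if_neg hv, if_neg hv]
      have lhs2 : (∑ u : P.1, ((Real.sqrt (P.2.degree u))⁻¹ * x (inl u)) *
            (∑ e : P.2.edgeSet, if u ∈ (e : Sym2 P.1) then x (inr (e, (0 : Fin (m+1)))) else 0))
          = ((1 - lam) * S) * (∑ u : P.1, x (inl u) ^ 2) := by
        rw [Finset.mul_sum]
        apply Finset.sum_congr rfl
        intro u _
        rw [E3 u]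
        field_simp [hDne u]
      rw [← lhs2, lhs1]
      apply Finset.sum_eq_zero
      intro e _
      rw [hW0 e, mul_zero]
    have hy2 : (∑ u : P.1, x (inl u) ^ 2) = 0 := by
      rcases mul_eq_zero.mp hdouble with h' | h'
      · rcases mul_eq_zero.mp h' with h'' | h''
        · exact absurd h'' hlam
        · exact absurd h'' hSne
      · exact h'
    have hy0 : ∀ u : P.1, x (inl u) = 0 := by
      intro u
      have h := (Finset.sum_eq_zero_iff_of_nonneg
        (fun i _ => sq_nonneg (x (inl i)))).mp hy2 u (Finset.mem_univ u)
      exact pow_eq_zero_iff (two_ne_zero) |>.mp h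
    have hT0 : ∀ u : P.1, (∑ e : P.2.edgeSet,
        if u ∈ (e : Sym2 P.1) then x (inr (e, (0 : Fin (m+1)))) else 0) = 0 := by
      intro u
      rw [E3 u, hy0 u, mul_zero, mul_zero]
    have hF := hker (fun a b => ∑ e : P.2.edgeSet,
        if (e : Sym2 P.1) = s(a, b) then x (inr (e, (0 : Fin (m+1)))) else 0)
      (fun a b hadj => Finset.sum_eq_zero fun e _ =>
        if_neg (fun hh : (e : Sym2 P.1) = s(a, b) =>
          hadj ((SimpleGraph.mem_edgeSet _).mp (hh ▸ e.2))))
      (fun a b => Finset.sum_congr rfl fun e _ => by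
        rw [show (s(b, a) : Sym2 P.1) = s(a, b) from Sym2.eq_swap])
      (fun u => by
        rw [Finset.sum_comm,
          Finset.sum_congr rfl (fun e _ => sum_eq_other e u (x (inr (e, (0 : Fin (m+1))))))]
        exact hT0 u)
    have hX0 : ∀ e : P.2.edgeSet, x (inr (e, (0 : Fin (m+1)))) = 0 := by
      intro e
      obtain ⟨a, b, hab, he⟩ := edge_endpoints e
      have h := hF a b
      rw [← sum_edge_eq' (fun e' => x (inr (e', (0 : Fin (m+1))))) e]
      rw [show (e : Sym2 P.1) = s(a, b) from he]
      exact h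
    exact hxzero hy0 hX0
  have hmu2 : ((m:ℝ) + 2) * lam * (2 - lam) ≠ 2 := by
    intro hh
    apply hKne
    rw [hKdef]
    linear_combination -hh
  refine ⟨hmu2, fun u => x (inl u), ?_, ?_⟩
  · intro hy0f
    have hy0 : ∀ u : P.1, x (inl u) = 0 := fun u => congrFun hy0f u
    have hX0 : ∀ e : P.2.edgeSet, x (inr (e, (0 : Fin (m+1)))) = 0 := by
      intro e
      have h := EK e
      rw [hWy hy0 e, mul_zero] at h
      exact (mul_eq_zero.mp h).resolve_left hKne
    exact hxzero hy0 hX0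
  · funext u
    rw [normLap_mulVec_apply _ _ u (hdeg u)]
    have hsum : (∑ v : P.1, if P.2.Adj u v
          then (Real.sqrt (P.2.degree v))⁻¹ * x (inl v) else 0)
        = (K - 1) * (Real.sqrt (P.2.degree u) * x (inl u)) := by
      have hWdec : ∀ e : P.2.edgeSet, (if u ∈ (e : Sym2 P.1) then W e else 0)
          = (if u ∈ (e : Sym2 P.1) then (Real.sqrt (P.2.degree u))⁻¹ * x (inl u) else 0)
            + ∑ v : P.1, (if (e : Sym2 P.1) = s(u, v)
                then (Real.sqrt (P.2.degree v))⁻¹ * x (inl v) else 0) := by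
        intro e
        by_cases hu : u ∈ (e : Sym2 P.1)
        · rw [if_pos hu, if_pos hu, hW]
          obtain ⟨a, b, hab, he⟩ := edge_endpoints e
          rcases Sym2.mem_iff.mp (he ▸ hu) with rfl | rfl
          · simp_rw [show (e : Sym2 P.1) = s(u, b) from he]
            rw [sum_mem_pair hab.ne, sum_other u b]
          · simp_rw [show (e : Sym2 P.1) = s(u, a) from he.trans Sym2.eq_swap]
            rw [sum_mem_pair hab.ne', sum_other u a]
        · rw [if_neg hu, if_neg hu, zero_add]
          symm
          apply Finset.sum_eq_zero
          intro v _
          rw [if_neg (fun hh : (e : Sym2 P.1) = s(u, v) =>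
            hu (by rw [hh]; exact Sym2.mem_mk_left u v))]
      have hA1 : (∑ e : P.2.edgeSet, if u ∈ (e : Sym2 P.1) then W e else 0)
          = Real.sqrt (P.2.degree u) * x (inl u)
            + ∑ v : P.1, (if P.2.Adj u v then (Real.sqrt (P.2.degree v))⁻¹ * x (inl v) else 0) := by
        rw [Finset.sum_congr rfl (fun e _ => hWdec e), Finset.sum_add_distrib,
          sum_incidence_eq_degree', swap_incidence_sum]
        congr 1
        exact dsqrt_cancel _ _ (le_of_lt (hd u))
      have hA2 : (∑ e : P.2.edgeSet, if u ∈ (e : Sym2 P.1) then W e else 0)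
          = K * (Real.sqrt (P.2.degree u) * x (inl u)) := by
        have step1 : ∀ e : P.2.edgeSet, (if u ∈ (e : Sym2 P.1) then W e else 0)
            = (K / ((1 - lam) * S)) *
              (if u ∈ (e : Sym2 P.1) then x (inr (e, (0 : Fin (m+1)))) else 0) := by
          intro e
          by_cases hu : u ∈ (e : Sym2 P.1)
          · rw [if_pos hu, if_pos hu]
            have h := EK e
            field_simp
            linear_combination -h
          · rw [if_neg hu, if_neg hu, mul_zero]
        rw [Finset.sum_congr rfl (fun e _ => step1 e), ← Finset.mul_sum, E3 u]
        field_simp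
      have hcomb := hA1.symm.trans hA2
      linear_combination hcomb
    rw [hsum]
    have hKmu : ((m:ℝ) + 2) * lam * (2 - lam) = 2 - K := by rw [hKdef]; ring
    show _ = (((m:ℝ) + 2) * lam * (2 - lam)) * x (inl u)
    rw [hKmu]
    field_simp [hDne u]
    ring
end StepMain



/-- If λ ∉ {0,1,2} is a normalized Laplacian eigenvalue of G_{n+1}(m), then
μ = (m+2)λ(2-λ) is a normalized Laplacian eigenvalue of G_n(m) with μ ∉ {0,2},
and λ = 1 ± sqrt(1 - μ/(m+2)). -/
theorem fractal_eigenvalue_recursion (m n : ℕ) (hm : 1 ≤ m) (lam : ℝ)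
    (hmem : lam ∈ spectrum ℝ (normLap (fractal m (n + 1)).2))
    (h0 : lam ≠ 0) (h1 : lam ≠ 1) (h2 : lam ≠ 2) :
    ((m : ℝ) + 2) * lam * (2 - lam) ∈ spectrum ℝ (normLap (fractal m n).2) ∧
    ((m : ℝ) + 2) * lam * (2 - lam) ≠ 0 ∧
    ((m : ℝ) + 2) * lam * (2 - lam) ≠ 2 ∧
    (lam = 1 + Real.sqrt (1 - ((m : ℝ) + 2) * lam * (2 - lam) / ((m : ℝ) + 2)) ∨
     lam = 1 - Real.sqrt (1 - ((m : ℝ) + 2) * lam * (2 - lam) / ((m : ℝ) + 2))) := by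
  obtain ⟨x, hx, heq⟩ := eig_of_mem_spectrum _ lam hmem
  obtain ⟨hmu2, y, hy, heig⟩ := step_main (m := m) (P := fractal m n)
    (instF := fractal_fintype m (n+1)) (fractal_degree_pos m n) (fractal_P m n)
    lam h1 x hx heq
  have hmem' : ((m:ℝ) + 2) * lam * (2 - lam) ∈ spectrum ℝ (normLap (fractal m n).2) :=
    mem_spectrum_of_eig _ _ y hy heig
  have hm2ne : ((m:ℝ) + 2) ≠ 0 := by positivity
  have hmu0 : ((m:ℝ) + 2) * lam * (2 - lam) ≠ 0 :=
    mul_ne_zero (mul_ne_zero hm2ne h0) (sub_ne_zero.mpr (Ne.symm h2))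
  refine ⟨hmem', hmu0, hmu2, ?_⟩
  have hsq : 1 - ((m:ℝ) + 2) * lam * (2 - lam) / ((m:ℝ) + 2) = (1 - lam)^2 := by
    field_simp
    ring
  rw [hsq, Real.sqrt_sq_eq_abs]
  by_cases hl : lam ≤ 1
  · right; rw [abs_of_nonneg (by linarith)]; ring
  · left; rw [abs_of_nonpos (by linarith)]; ring
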